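/- For γ > 0 and t₄, t₆, m₂ ∈ ℝ, define the hexic spectral density ρ(x) = (1/2π)( t₆x⁴ + (t₄ + 2t₆γ² + 10t₆m₂)x² + (1/γ² − t₄γ² − 4t₆γ⁴ − 10t₆γ²m₂) )√(4γ² − x²) for x ∈ [−2γ, 2γ] (and ρ = 0 outside). Assume 10t₆γ⁶ ≠ 1. Then the self-consistency condition ∫_{−2γ}^{2γ} x² ρ(x) dx = m₂ holds if and only if m₂ = −γ²(5t₆γ⁶ + t₄γ⁴ + 1)/(10t₆γ⁶ − 1). -/

import Mathlib

private lemma hexic_moment (γ a b c : ℝ) (hγ : 0 < γ) :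
    ∫ x in (-(2 * γ))..(2 * γ),
        (a * x ^ 6 + b * x ^ 4 + c * x ^ 2) * Real.sqrt (4 * γ ^ 2 - x ^ 2)
      = Real.pi * (2 * c * γ ^ 4 + 4 * b * γ ^ 6 + 10 * a * γ ^ 8) := by
  set s : ℝ := 4 * γ ^ 2 with hs
  set q7 : ℝ := a / 8 with hq7
  set q5 : ℝ := b / 6 - a * s / 48 with hq5
  set q3 : ℝ := c / 4 - b * s / 24 - 5 * a * s ^ 2 / 192 with hq3
  set q1 : ℝ := -(c * s / 8) - b * s ^ 2 / 16 - 5 * a * s ^ 3 / 128 with hq1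
  set K : ℝ := c * s ^ 2 / 8 + b * s ^ 3 / 16 + 5 * a * s ^ 4 / 128 with hK
  set F : ℝ → ℝ := fun x =>
    (q7 * x ^ 7 + q5 * x ^ 5 + q3 * x ^ 3 + q1 * x) * Real.sqrt (s - x ^ 2) +
      K * Real.arcsin (x / (2 * γ)) with hF
  have h2γ : (0:ℝ) < 2 * γ := by linarith
  have hle : -(2 * γ) ≤ 2 * γ := by linarith
  have hcont : ContinuousOn F (Set.Icc (-(2 * γ)) (2 * γ)) := by
    apply Continuous.continuousOn
    apply Continuous.add
    · exact (by fun_prop : Continuous fun x : ℝ =>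
        q7 * x ^ 7 + q5 * x ^ 5 + q3 * x ^ 3 + q1 * x).mul
        (Real.continuous_sqrt.comp (by fun_prop))
    · exact continuous_const.mul (Real.continuous_arcsin.comp (by fun_prop))
  have hderiv : ∀ x ∈ Set.Ioo (-(2 * γ)) (2 * γ),
      HasDerivAt F ((a * x ^ 6 + b * x ^ 4 + c * x ^ 2) * Real.sqrt (s - x ^ 2)) x := by
    intro x hx
    obtain ⟨hx1, hx2⟩ := hx
    have hxs : x ^ 2 < s := by nlinarith
    have hu : 0 < s - x ^ 2 := by linarith
    have ht0 : 0 < Real.sqrt (s - x ^ 2) := Real.sqrt_pos.mpr hu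
    have htt : Real.sqrt (s - x ^ 2) * Real.sqrt (s - x ^ 2) = s - x ^ 2 :=
      Real.mul_self_sqrt hu.le
    have hg : HasDerivAt (fun x : ℝ => s - x ^ 2) (-(2 * x)) x := by
      simpa using ((hasDerivAt_pow 2 x).const_sub s)
    have hsq : HasDerivAt (fun x : ℝ => Real.sqrt (s - x ^ 2))
        (-(2 * x) / (2 * Real.sqrt (s - x ^ 2))) x := hg.sqrt hu.ne'
    have hP : HasDerivAt (fun x : ℝ => q7 * x ^ 7 + q5 * x ^ 5 + q3 * x ^ 3 + q1 * x)
        (7 * q7 * x ^ 6 + 5 * q5 * x ^ 4 + 3 * q3 * x ^ 2 + q1) x := by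
      have h7 := (hasDerivAt_pow 7 x).const_mul q7
      have h5 := (hasDerivAt_pow 5 x).const_mul q5
      have h3 := (hasDerivAt_pow 3 x).const_mul q3
      have h1 := (hasDerivAt_id x).const_mul q1
      refine (((h7.add h5).add h3).add h1).congr_deriv ?_
      push_cast; ring
    have hlt : x / (2 * γ) < 1 := (div_lt_one h2γ).mpr hx2
    have hgt : -1 < x / (2 * γ) := by
      rw [lt_div_iff₀ h2γ]; linarith
    have hd := Real.hasDerivAt_arcsin (ne_of_gt hgt) (ne_of_lt hlt)
    have hdiv : HasDerivAt (fun x : ℝ => x / (2 * γ)) (1 / (2 * γ)) x := by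
      simpa using (hasDerivAt_id x).div_const (2 * γ)
    have harc : HasDerivAt (fun x : ℝ => Real.arcsin (x / (2 * γ)))
        (1 / Real.sqrt (1 - (x / (2 * γ)) ^ 2) * (1 / (2 * γ))) x := hd.comp (h₂ := Real.arcsin) x hdiv
    have hroot : Real.sqrt (1 - (x / (2 * γ)) ^ 2) = Real.sqrt (s - x ^ 2) / (2 * γ) := by
      have h1 : 1 - (x / (2 * γ)) ^ 2 = (s - x ^ 2) / (2 * γ) ^ 2 := by
        field_simp [hs]; ring
      rw [h1, Real.sqrt_div hu.le, Real.sqrt_sq h2γ.le]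
    have H := (hP.mul hsq).add (harc.const_mul K)
    refine H.congr_deriv (Eq.symm ?_)
    rw [hroot]
    set t : ℝ := Real.sqrt (s - x ^ 2) with hT
    have e2 : 1 / (t / (2 * γ)) * (1 / (2 * γ)) = 1 / t := by
      rw [one_div_div]
      field_simp
    rw [e2]
    have e3 : (7 * q7 * x ^ 6 + 5 * q5 * x ^ 4 + 3 * q3 * x ^ 2 + q1) * t +
        (q7 * x ^ 7 + q5 * x ^ 5 + q3 * x ^ 3 + q1 * x) * (-(2 * x) / (2 * t)) +
        K * (1 / t)
        = ((7 * q7 * x ^ 6 + 5 * q5 * x ^ 4 + 3 * q3 * x ^ 2 + q1) * (t * t) -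
            (q7 * x ^ 7 + q5 * x ^ 5 + q3 * x ^ 3 + q1 * x) * x + K) / t := by
      field_simp
      ring
    rw [e3, htt, eq_div_iff ht0.ne', mul_assoc, htt]
    simp only [hq7, hq5, hq3, hq1, hK]
    ring
  have hint : IntervalIntegrable
      (fun x => (a * x ^ 6 + b * x ^ 4 + c * x ^ 2) * Real.sqrt (s - x ^ 2))
      MeasureTheory.volume (-(2 * γ)) (2 * γ) := by
    apply Continuous.intervalIntegrable
    exact (by fun_prop : Continuous fun x : ℝ =>
      a * x ^ 6 + b * x ^ 4 + c * x ^ 2).mul (Real.continuous_sqrt.comp (by fun_prop))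
  have key := intervalIntegral.integral_eq_sub_of_hasDerivAt_of_le hle hcont hderiv hint
  rw [key]
  have hz : s - (2 * γ) ^ 2 = 0 := by rw [hs]; ring
  have hz' : s - (-(2 * γ)) ^ 2 = 0 := by rw [hs]; ring
  have ha1 : (2 * γ) / (2 * γ) = (1:ℝ) := div_self h2γ.ne'
  have ha2 : (-(2 * γ)) / (2 * γ) = (-1:ℝ) := by
    rw [neg_div, ha1]
  rw [hF]
  simp only [hz, hz', ha1, ha2, Real.sqrt_zero, mul_zero, zero_add,
    Real.arcsin_one, Real.arcsin_neg_one]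
  rw [hK, hs]
  ring

/-- Self-consistency of the second moment of the hexic spectral density:
assuming `10t₆γ⁶ ≠ 1`, `∫ x² ρ(x) dx = m₂` iff
`m₂ = -γ²(5t₆γ⁶ + t₄γ⁴ + 1)/(10t₆γ⁶ - 1)`. -/
theorem hexic_second_moment_selfconsistency (γ t₄ t₆ m₂ : ℝ) (hγ : 0 < γ)
    (h : 10 * t₆ * γ ^ 6 ≠ 1) :
    (∫ x in (-(2 * γ))..(2 * γ),
        x ^ 2 * ((1 / (2 * Real.pi)) *
          (t₆ * x ^ 4 + (t₄ + 2 * t₆ * γ ^ 2 + 10 * t₆ * m₂) * x ^ 2 +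
            (1 / γ ^ 2 - t₄ * γ ^ 2 - 4 * t₆ * γ ^ 4 - 10 * t₆ * γ ^ 2 * m₂)) *
          Real.sqrt (4 * γ ^ 2 - x ^ 2)) = m₂) ↔
      m₂ = -(γ ^ 2 * (5 * t₆ * γ ^ 6 + t₄ * γ ^ 4 + 1)) / (10 * t₆ * γ ^ 6 - 1) := by
  have hπ : Real.pi ≠ 0 := Real.pi_ne_zero
  set B : ℝ := t₄ + 2 * t₆ * γ ^ 2 + 10 * t₆ * m₂ with hB
  set C : ℝ := 1 / γ ^ 2 - t₄ * γ ^ 2 - 4 * t₆ * γ ^ 4 - 10 * t₆ * γ ^ 2 * m₂ with hC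
  have hrw : ∀ x : ℝ,
      x ^ 2 * ((1 / (2 * Real.pi)) * (t₆ * x ^ 4 + B * x ^ 2 + C) *
          Real.sqrt (4 * γ ^ 2 - x ^ 2)) =
        (1 / (2 * Real.pi)) *
          ((t₆ * x ^ 6 + B * x ^ 4 + C * x ^ 2) * Real.sqrt (4 * γ ^ 2 - x ^ 2)) := by
    intro x; ring
  simp_rw [hrw]
  rw [intervalIntegral.integral_const_mul, hexic_moment γ t₆ B C hγ]
  have hval : (1 / (2 * Real.pi)) *
      (Real.pi * (2 * C * γ ^ 4 + 4 * B * γ ^ 6 + 10 * t₆ * γ ^ 8)) =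
      γ ^ 2 + t₄ * γ ^ 6 + 5 * t₆ * γ ^ 8 + 10 * t₆ * γ ^ 6 * m₂ := by
    rw [hB, hC]
    field_simp
    ring
  rw [hval]
  have hden : 10 * t₆ * γ ^ 6 - 1 ≠ 0 := sub_ne_zero.mpr h
  constructor
  · intro he
    rw [eq_div_iff hden]
    linear_combination he
  · intro he
    rw [eq_div_iff hden] at he
    linear_combination he
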